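/- Let h: [0,∞) → (0,∞) be continuous with h(0) = 1 and h(E) ≤ C(1+E^k) for constants C > 0, k ∈ ℕ. For each δ > 0, the ratio (∫₀^δ E³/(e^{E/T}-1) · h(E) dE) / (∫_δ^∞ E³/(e^{E/T}-1) · h(E) dE) tends to +∞ as T → 0⁺. -/

import Mathlib

open MeasureTheory Set Filter Real

lemma aux_int (n : ℕ) (a : ℝ) :
    IntegrableOn (fun x : ℝ => x ^ n * Real.exp (-x)) (Set.Ioi a) := by
  apply integrable_of_isBigO_exp_neg (b := 1/2) one_half_pos
  · exact ((continuous_pow n).mul (Real.continuous_exp.comp continuous_neg)).continuousOn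
  · have h := tendsto_rpow_mul_exp_neg_mul_atTop_nhds_zero (n : ℝ) (1/2) one_half_pos
    have h2 : Tendsto (fun x : ℝ => x ^ n * Real.exp (-(1/2) * x)) atTop (nhds 0) := by
      apply h.congr'
      filter_upwards [eventually_gt_atTop (0:ℝ)] with x hx
      rw [Real.rpow_natCast]
    rw [Asymptotics.isBigO_iff]
    refine ⟨1, ?_⟩
    filter_upwards [h2.eventually (eventually_le_nhds (by norm_num : (0:ℝ) < 1)),
      eventually_ge_atTop (0:ℝ)] with x hx hx0
    have hxe : x ^ n * Real.exp (-x) = (x ^ n * Real.exp (-(1/2) * x)) * Real.exp (-(1/2) * x) := by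
      rw [mul_assoc, ← Real.exp_add]; ring_nf
    rw [Real.norm_eq_abs, Real.norm_eq_abs, hxe, abs_of_nonneg (by positivity), one_mul,
      abs_of_nonneg (Real.exp_pos _).le]
    nlinarith [Real.exp_pos (-(1/2) * x), hx]

lemma aux_pos {a : ℝ} {f : ℝ → ℝ} (hint : IntegrableOn f (Set.Ioi a))
    (hpos : ∀ x ∈ Set.Ioi a, 0 < f x) : 0 < ∫ x in Set.Ioi a, f x := by
  rw [setIntegral_pos_iff_support_of_nonneg_ae _ hint]
  · refine lt_of_lt_of_le ?_ (measure_mono fun x hx => ⟨(hpos x hx).ne', hx⟩)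
    simp [Real.volume_Ioi]
  · exact (ae_restrict_iff' measurableSet_Ioi).2 (Filter.Eventually.of_forall fun x hx => (hpos x hx).le)

theorem stmt9 (h : ℝ → ℝ) (C : ℝ) (k : ℕ) (δ : ℝ)
    (hc : ContinuousOn h (Set.Ici 0)) (hpos : ∀ E : ℝ, 0 ≤ E → 0 < h E)
    (hone : h 0 = 1) (hC : 0 < C)
    (hbound : ∀ E : ℝ, 0 ≤ E → h E ≤ C * (1 + E ^ k)) (hδ : 0 < δ) :
    Filter.Tendsto
      (fun T : ℝ =>
        (∫ E in Set.Ioc (0:ℝ) δ, E ^ 3 / (Real.exp (E / T) - 1) * h E) /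
        (∫ E in Set.Ioi δ, E ^ 3 / (Real.exp (E / T) - 1) * h E))
      (nhdsWithin 0 (Set.Ioi 0)) Filter.atTop := by
  -- minimum of h on [0, δ]
  obtain ⟨x₀, hx₀, hmin⟩ := isCompact_Icc.exists_isMinOn (Set.nonempty_Icc.2 hδ.le)
    (hc.mono (fun x hx => hx.1))
  set m : ℝ := h x₀ with hm_def
  have hm : 0 < m := hpos x₀ hx₀.1
  -- dominating function on the tail
  set G : ℝ → ℝ := fun E => 2 * C * (E ^ 3 * Real.exp (-E) + E ^ (3 + k) * Real.exp (-E))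
    with hG_def
  have hGint : IntegrableOn G (Set.Ioi δ) := ((aux_int 3 δ).add (aux_int (3 + k) δ)).const_mul _
  have hGpos : ∀ E ∈ Set.Ioi δ, 0 < G E := by
    intro E hE
    have hE0 : (0:ℝ) < E := hδ.trans hE
    have := Real.exp_pos (-E)
    positivity
  set K : ℝ := ∫ E in Set.Ioi δ, G E with hK_def
  have hK : 0 < K := aux_pos hGint hGpos
  set A : ℝ := m * Real.exp (-1) / 4 with hA_def
  have hA : 0 < A := by positivity
  set T₀ : ℝ := min δ (1/2) with hT0_def
  have hT₀ : 0 < T₀ := lt_min hδ (by norm_num)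
  -- continuity of the integrand on (0, ∞)
  have hcf : ∀ T : ℝ, 0 < T →
      ContinuousOn (fun E => E ^ 3 / (Real.exp (E / T) - 1) * h E) (Set.Ioi 0) := by
    intro T hT
    apply ContinuousOn.mul _ (hc.mono Set.Ioi_subset_Ici_self)
    apply ContinuousOn.div (continuous_pow 3).continuousOn
      ((Real.continuous_exp.comp (continuous_id.div_const T)).sub continuous_const).continuousOn
    intro x hx
    have : (1:ℝ) < Real.exp (x / T) := by
      rw [← Real.exp_zero]
      exact Real.exp_lt_exp.2 (div_pos hx hT)
    exact (sub_pos.2 this).ne'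
  -- main eventual lower bound
  have key : ∀ᶠ T in nhdsWithin (0:ℝ) (Set.Ioi 0),
      A * T ^ 4 / (Real.exp (-(δ / (2 * T))) * K) ≤
      (∫ E in Set.Ioc (0:ℝ) δ, E ^ 3 / (Real.exp (E / T) - 1) * h E) /
      (∫ E in Set.Ioi δ, E ^ 3 / (Real.exp (E / T) - 1) * h E) := by
    filter_upwards [Ioo_mem_nhdsGT_of_mem (Set.mem_Ico.2 ⟨le_refl 0, hT₀⟩)] with T hT
    obtain ⟨hTpos, hTlt⟩ := hT
    have hTδ : T ≤ δ := le_of_lt (lt_of_lt_of_le hTlt (min_le_left _ _))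
    have hT2 : 2 * T ≤ 1 := by
      have := lt_of_lt_of_le hTlt (min_le_right _ _); linarith
    set f : ℝ → ℝ := fun E => E ^ 3 / (Real.exp (E / T) - 1) * h E with hf_def
    have hfpos : ∀ E : ℝ, 0 < E → 0 < f E := by
      intro E hE
      have h1 : (1:ℝ) < Real.exp (E / T) := by
        rw [← Real.exp_zero]; exact Real.exp_lt_exp.2 (div_pos hE hTpos)
      have := hpos E hE.le
      have : 0 < E ^ 3 / (Real.exp (E / T) - 1) := div_pos (by positivity) (by linarith)
      exact mul_pos this (hpos E hE.le)
    -- pointwise tail bound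
    have htail : ∀ E ∈ Set.Ioi δ, f E ≤ Real.exp (-(δ / (2 * T))) * G E := by
      intro E hE
      have hEδ : δ < E := hE
      have hE0 : (0:ℝ) < E := hδ.trans hEδ
      have hx1 : (1:ℝ) ≤ E / T := (one_le_div hTpos).2 (hTδ.trans hEδ.le)
      have h2exp : (2:ℝ) ≤ Real.exp (E / T) := by
        have h1 := Real.add_one_le_exp (1:ℝ)
        have := Real.exp_le_exp.2 hx1
        linarith
      have hd1 : Real.exp (E / T) / 2 ≤ Real.exp (E / T) - 1 := by linarith
      have hd0 : (0:ℝ) < Real.exp (E / T) / 2 := by positivity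
      have hinv : 1 / (Real.exp (E / T) - 1) ≤ 2 * Real.exp (-(E / T)) := by
        have := one_div_le_one_div_of_le hd0 hd1
        rw [Real.exp_neg]
        rw [one_div_div] at this
        calc 1 / (Real.exp (E / T) - 1) ≤ 2 / Real.exp (E / T) := this
          _ = 2 * (Real.exp (E / T))⁻¹ := by rw [div_eq_mul_inv]
      -- split the exponential
      have hsplit : Real.exp (-(E / T)) = Real.exp (-(E / (2 * T))) * Real.exp (-(E / (2 * T))) := by
        rw [← Real.exp_add]
        congr 1
        field_simp
        ring
      have h2T : (0:ℝ) < 2 * T := by linarith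
      have he1 : Real.exp (-(E / (2 * T))) ≤ Real.exp (-(δ / (2 * T))) :=
        Real.exp_le_exp.2 (by
          have : δ / (2 * T) ≤ E / (2 * T) := by gcongr
          linarith)
      have he2 : Real.exp (-(E / (2 * T))) ≤ Real.exp (-E) :=
        Real.exp_le_exp.2 (by
          have : E ≤ E / (2 * T) := by
            rw [le_div_iff₀ h2T]
            nlinarith
          linarith)
      have hexp_bound : Real.exp (-(E / T)) ≤ Real.exp (-(δ / (2 * T))) * Real.exp (-E) := by
        rw [hsplit]
        exact mul_le_mul he1 he2 (Real.exp_pos _).le (Real.exp_pos _).le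
      have hhE : h E ≤ C * (1 + E ^ k) := hbound E hE0.le
      have hhE0 : 0 < h E := hpos E hE0.le
      have hfle : f E ≤ E ^ 3 * (2 * Real.exp (-(E / T))) * (C * (1 + E ^ k)) := by
        have hnn : (0:ℝ) ≤ E ^ 3 / (Real.exp (E / T) - 1) := by
          apply div_nonneg (by positivity); linarith
        calc f E ≤ E ^ 3 / (Real.exp (E / T) - 1) * (C * (1 + E ^ k)) :=
              mul_le_mul_of_nonneg_left hhE hnn
          _ = E ^ 3 * (1 / (Real.exp (E / T) - 1)) * (C * (1 + E ^ k)) := by ring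
          _ ≤ E ^ 3 * (2 * Real.exp (-(E / T))) * (C * (1 + E ^ k)) := by
              apply mul_le_mul_of_nonneg_right _ (by positivity)
              exact mul_le_mul_of_nonneg_left hinv (by positivity)
      calc f E ≤ E ^ 3 * (2 * Real.exp (-(E / T))) * (C * (1 + E ^ k)) := hfle
        _ ≤ E ^ 3 * (2 * (Real.exp (-(δ / (2 * T))) * Real.exp (-E))) * (C * (1 + E ^ k)) := by
            apply mul_le_mul_of_nonneg_right _ (by positivity)
            apply mul_le_mul_of_nonneg_left _ (by positivity)
            exact mul_le_mul_of_nonneg_left hexp_bound (by norm_num)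
        _ = Real.exp (-(δ / (2 * T))) * G E := by
            rw [hG_def]
            simp only []
            rw [pow_add]
            ring
    -- integrability on the tail
    have hfmeas : AEStronglyMeasurable f (volume.restrict (Set.Ioi δ)) :=
      ((hcf T hTpos).mono (fun x (hx : x ∈ Set.Ioi δ) => hδ.trans hx)).aestronglyMeasurable
        measurableSet_Ioi
    have hfint_tail : IntegrableOn f (Set.Ioi δ) := by
      apply Integrable.mono' (hGint.const_mul (Real.exp (-(δ / (2 * T))))) hfmeas
      rw [ae_restrict_iff' measurableSet_Ioi]
      refine Filter.Eventually.of_forall fun E hE => ?_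
      rw [Real.norm_eq_abs, abs_of_nonneg (hfpos E (hδ.trans hE)).le]
      exact htail E hE
    have hden_pos : 0 < ∫ E in Set.Ioi δ, f E :=
      aux_pos hfint_tail (fun E hE => hfpos E (hδ.trans hE))
    have hden_le : (∫ E in Set.Ioi δ, f E) ≤ Real.exp (-(δ / (2 * T))) * K := by
      calc (∫ E in Set.Ioi δ, f E)
          ≤ ∫ E in Set.Ioi δ, Real.exp (-(δ / (2 * T))) * G E :=
            setIntegral_mono_on hfint_tail (hGint.const_mul _) measurableSet_Ioi htail
        _ = Real.exp (-(δ / (2 * T))) * K := by rw [integral_const_mul]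
    -- numerator lower bound
    have hfint_num : IntegrableOn f (Set.Ioc 0 δ) := by
      refine ⟨((hcf T hTpos).mono Set.Ioc_subset_Ioi_self).aestronglyMeasurable measurableSet_Ioc, ?_⟩
      apply HasFiniteIntegral.restrict_of_bounded (C := T * δ ^ 2 * (C * (1 + δ ^ k)))
        measure_Ioc_lt_top
      rw [ae_restrict_iff' measurableSet_Ioc]
      refine Filter.Eventually.of_forall fun E hE => ?_
      obtain ⟨hE0, hEδ⟩ := hE
      rw [Real.norm_eq_abs, abs_of_nonneg (hfpos E hE0).le]
      have hET : 0 < E / T := div_pos hE0 hTpos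
      have hden_lb : E / T ≤ Real.exp (E / T) - 1 := by
        have := Real.add_one_le_exp (E / T); linarith
      have h1 : E ^ 3 / (Real.exp (E / T) - 1) ≤ E ^ 3 / (E / T) := by
        apply div_le_div_of_nonneg_left (by positivity) hET hden_lb
      have h2 : E ^ 3 / (E / T) = T * E ^ 2 := by field_simp
      have hhE : h E ≤ C * (1 + E ^ k) := hbound E hE0.le
      have hEk : E ^ k ≤ δ ^ k := pow_le_pow_left₀ hE0.le hEδ k
      have hE2 : E ^ 2 ≤ δ ^ 2 := pow_le_pow_left₀ hE0.le hEδ 2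
      calc f E ≤ (T * E ^ 2) * h E := by
            rw [← h2]
            exact mul_le_mul_of_nonneg_right h1 (hpos E hE0.le).le
        _ ≤ (T * δ ^ 2) * (C * (1 + δ ^ k)) := by
            apply mul_le_mul
            · exact mul_le_mul_of_nonneg_left hE2 hTpos.le
            · exact le_trans hhE (by nlinarith)
            · exact (hpos E hE0.le).le
            · positivity
        _ = T * δ ^ 2 * (C * (1 + δ ^ k)) := by ring
    have hnum1 : (∫ E in Set.Ioc (0:ℝ) T, f E) ≤ ∫ E in Set.Ioc (0:ℝ) δ, f E := by
      apply setIntegral_mono_set hfint_num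
      · exact (ae_restrict_iff' measurableSet_Ioc).2
          (Filter.Eventually.of_forall fun E hE => (hfpos E hE.1).le)
      · exact (Set.Ioc_subset_Ioc_right hTδ).eventuallyLE
    have hptnum : ∀ E ∈ Set.Ioc (0:ℝ) T, m * Real.exp (-1) * E ^ 3 ≤ f E := by
      intro E hE
      obtain ⟨hE0, hET⟩ := hE
      have hx : 0 < E / T := div_pos hE0 hTpos
      have hx1 : E / T ≤ 1 := (div_le_one hTpos).2 hET
      have he1 : Real.exp (E / T) - 1 > 0 := by
        have : (1:ℝ) < Real.exp (E / T) := by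
          rw [← Real.exp_zero]; exact Real.exp_lt_exp.2 hx
        linarith
      have hinv : Real.exp (-(E / T)) ≤ 1 / (Real.exp (E / T) - 1) := by
        rw [Real.exp_neg, ← one_div]
        exact one_div_le_one_div_of_le he1 (by linarith [Real.exp_pos (E / T)])
      have hexp1 : Real.exp (-1) ≤ Real.exp (-(E / T)) := Real.exp_le_exp.2 (by linarith)
      have hmle : m ≤ h E := hmin ⟨hE0.le, hET.trans hTδ⟩
      have hE3 : (0:ℝ) < E ^ 3 := by positivity
      calc m * Real.exp (-1) * E ^ 3 ≤ m * Real.exp (-(E / T)) * E ^ 3 :=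
            mul_le_mul_of_nonneg_right (mul_le_mul_of_nonneg_left hexp1 hm.le) hE3.le
        _ ≤ m * (1 / (Real.exp (E / T) - 1)) * E ^ 3 :=
            mul_le_mul_of_nonneg_right (mul_le_mul_of_nonneg_left hinv hm.le) hE3.le
        _ ≤ h E * (1 / (Real.exp (E / T) - 1)) * E ^ 3 := by
            have hp : 0 ≤ 1 / (Real.exp (E / T) - 1) := by positivity
            exact mul_le_mul_of_nonneg_right (mul_le_mul_of_nonneg_right hmle hp) hE3.le
        _ = f E := by
            show _ = E ^ 3 / (Real.exp (E / T) - 1) * h E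
            rw [div_eq_mul_inv, ← one_div]
            ring
    have hnum2 : m * Real.exp (-1) * (T ^ 4 / 4) ≤ ∫ E in Set.Ioc (0:ℝ) T, f E := by
      have hint1 : IntegrableOn (fun E : ℝ => m * Real.exp (-1) * E ^ 3) (Set.Ioc 0 T) :=
        ((continuous_const.mul (continuous_pow 3)).integrableOn_Ioc)
      have := setIntegral_mono_on hint1
        (hfint_num.mono_set (Set.Ioc_subset_Ioc_right hTδ)) measurableSet_Ioc hptnum
      have heq : (∫ E in Set.Ioc (0:ℝ) T, m * Real.exp (-1) * E ^ 3) =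
          m * Real.exp (-1) * (T ^ 4 / 4) := by
        rw [integral_const_mul, ← intervalIntegral.integral_of_le hTpos.le,
          integral_pow]
        norm_num
      linarith [this, heq.ge]
    have hnum : A * T ^ 4 ≤ ∫ E in Set.Ioc (0:ℝ) δ, f E := by
      have : A * T ^ 4 = m * Real.exp (-1) * (T ^ 4 / 4) := by rw [hA_def]; ring
      linarith [hnum2, hnum1]
    have h0 : (0:ℝ) ≤ A * T ^ 4 := mul_nonneg hA.le (by positivity)
    exact div_le_div₀ (h0.trans hnum) hnum hden_pos hden_le
  -- the lower bound tends to infinity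
  have hlim : Tendsto (fun T : ℝ => A * T ^ 4 / (Real.exp (-(δ / (2 * T))) * K))
      (nhdsWithin (0:ℝ) (Set.Ioi 0)) atTop := by
    have hcore : Tendsto (fun u : ℝ => Real.exp (δ / 2 * u) / u ^ 4) atTop atTop := by
      have h2 : Tendsto (fun x : ℝ => Real.exp x / x ^ 4) atTop atTop :=
        tendsto_exp_div_pow_atTop 4
      have h3 : Tendsto (fun u : ℝ => δ / 2 * u) atTop atTop :=
        tendsto_id.const_mul_atTop (by positivity)
      have h4 := (h2.comp h3).const_mul_atTop (show (0:ℝ) < (δ / 2) ^ 4 by positivity)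
      apply h4.congr'
      filter_upwards [eventually_gt_atTop (0:ℝ)] with u hu
      simp only [Function.comp]
      rw [mul_pow]
      field_simp
    have h5 : Tendsto (fun T : ℝ => Real.exp (δ / 2 * T⁻¹) / (T⁻¹) ^ 4)
        (nhdsWithin (0:ℝ) (Set.Ioi 0)) atTop := hcore.comp tendsto_inv_nhdsGT_zero
    have h6 := h5.const_mul_atTop (show (0:ℝ) < A / K by positivity)
    apply h6.congr'
    filter_upwards [self_mem_nhdsWithin] with T (hT : T ∈ Set.Ioi (0:ℝ))
    have hT0 : (0:ℝ) < T := hT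
    have hKne : K ≠ 0 := hK.ne'
    rw [Real.exp_neg]
    have hδT : δ / 2 * T⁻¹ = δ / (2 * T) := by field_simp
    rw [hδT]
    have hexp := Real.exp_pos (δ / (2 * T))
    field_simp
  exact tendsto_atTop_mono' _ key hlim
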